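/- Let κ be a field of characteristic p > 0 and A a prime algebra over κ which is a purely inseparable field extension of κ. Then A = κ(a^{1/p}) for some a ∈ κ \ κ^p; in particular [A : κ] = p. -/

import Mathlib

open Polynomial

/-- Let `κ` be a field of characteristic `p > 0` and `A` a prime algebra over `κ`
(i.e. `κ → A` is not surjective and the only `κ`-subalgebras of `A` are `κ` and `A`)
which is a purely inseparable field extension of `κ`.  Then `A = κ(a^{1/p})` for some
`a ∈ κ \ κ^p`; in particular `[A : κ] = p`. -/
theorem primeAlgebra_purelyInseparable_iso_adjoin_p_th_root
    (κ : Type*) [Field κ] (p : ℕ) (hp : p.Prime) [CharP κ p]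
    (A : Type*) [Field A] [Algebra κ A]
    (hns : ¬ Function.Surjective (algebraMap κ A))
    (hsub : ∀ S : Subalgebra κ A, S = ⊥ ∨ S = ⊤)
    (hpi : IsPurelyInseparable κ A) :
    (∃ a : κ, a ∉ Set.range (fun x : κ => x ^ p) ∧
      Nonempty (A ≃ₐ[κ] AdjoinRoot (X ^ p - C a))) ∧
    Module.finrank κ A = p := by
  have hpA : CharP A p := charP_of_injective_algebraMap (algebraMap κ A).injective p
  haveI : ExpChar κ p := ExpChar.prime hp
  haveI : ExpChar A p := ExpChar.prime hp
  -- find y ∉ range with y^p ∈ range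
  obtain ⟨x, hx⟩ := not_forall.mp hns
  have key : ∃ y : A, y ∉ Set.range (algebraMap κ A) ∧ y ^ p ∈ (algebraMap κ A).range := by
    obtain ⟨n, hn⟩ := IsPurelyInseparable.pow_mem κ p x
    clear hpi
    induction n generalizing x with
    | zero => simp only [pow_zero, pow_one] at hn; exact absurd ⟨_, hn.choose_spec⟩ hx
    | succ m ih =>
      by_cases h : x ^ p ∈ (algebraMap κ A).range
      · exact ⟨x, hx, h⟩
      · refine ih (x ^ p) ?_ ?_
        · rintro ⟨c, hc⟩; exact h ⟨c, hc⟩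
        · rw [← pow_mul]
          rwa [show p * p ^ m = p ^ (m + 1) by ring]
  obtain ⟨y, hy, b, hb⟩ := key
  -- y generates A
  have hadj : Algebra.adjoin κ {y} = ⊤ := by
    rcases hsub (Algebra.adjoin κ {y}) with h | h
    · exfalso
      have : y ∈ Algebra.adjoin κ {y} := Algebra.self_mem_adjoin_singleton κ y
      rw [h, Algebra.mem_bot] at this
      exact hy this
    · exact h
  -- b ∉ κ^p
  have hbnot : b ∉ Set.range (fun x : κ => x ^ p) := by
    rintro ⟨c, hc⟩
    apply hy
    refine ⟨c, ?_⟩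
    have : (algebraMap κ A c) ^ p = y ^ p := by
      rw [← map_pow, show c ^ p = b from hc, hb]
    have := frobenius_inj A p (a₁ := algebraMap κ A c) (a₂ := y) (by
      simpa [frobenius_def] using this)
    exact this
  have hirr : Irreducible (X ^ p - C b) :=
    X_pow_sub_C_irreducible_of_prime hp (fun c hc => hbnot ⟨c, hc⟩)
  have hmonic : (X ^ p - C b).Monic := by
    apply monic_X_pow_sub_C _ hp.ne_zero
  have hroot : (Polynomial.aeval y) (X ^ p - C b) = 0 := by
    simp [hb]
  have hint : IsIntegral κ y := ⟨_, hmonic, by simpa using hroot⟩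
  have hmin : minpoly κ y = X ^ p - C b :=
    (minpoly.eq_of_irreducible_of_monic hirr hroot hmonic).symm
  -- κ⟮y⟯ = ⊤
  have htop : IntermediateField.adjoin κ {y} = ⊤ := by
    apply IntermediateField.toSubalgebra_injective
    rw [IntermediateField.adjoin_simple_toSubalgebra_of_isAlgebraic hint.isAlgebraic, hadj]
    rfl
  let e1 : IntermediateField.adjoin κ {y} ≃ₐ[κ] AdjoinRoot (minpoly κ y) :=
    (IntermediateField.adjoinRootEquivAdjoin κ hint).symm
  let e2 : A ≃ₐ[κ] IntermediateField.adjoin κ {y} :=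
    IntermediateField.topEquiv.symm.trans (IntermediateField.equivOfEq htop).symm
  have e3 : A ≃ₐ[κ] AdjoinRoot (X ^ p - C b) := hmin ▸ (e2.trans e1)
  refine ⟨⟨b, hbnot, ⟨e3⟩⟩, ?_⟩
  have := IntermediateField.adjoin.finrank hint
  rw [hmin, natDegree_X_pow_sub_C] at this
  rw [← this]
  exact (e2.toLinearEquiv.finrank_eq)
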